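/- Let k < m be positive integers, and let A, B be n×m real matrices where A satisfies the spark condition for sparsity k. Suppose π is a map on k-element subsets of {1,...,m} with Span{A_S} = Span{B_{π(S)}} for all k-element subsets S. Then π is injective (hence bijective). -/

import Mathlib

/-- A vector is `k`-sparse if it has at most `k` nonzero entries. -/
def KSparse {m : ℕ} (k : ℕ) (a : Fin m → ℝ) : Prop :=
  (Finset.univ.filter fun i => a i ≠ 0).card ≤ k

lemma sub_of_span {n m k : ℕ} (hk : 0 < k)
    (A : Matrix (Fin n) (Fin m) ℝ)
    (hA : ∀ a₁ a₂ : Fin m → ℝ, KSparse k a₁ → KSparse k a₂ →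
      A.mulVec a₁ = A.mulVec a₂ → a₁ = a₂)
    (S S' : Finset (Fin m)) (hS : S.card = k) (hS' : S'.card = k)
    (h : Submodule.span ℝ (A.transpose '' ↑S) = Submodule.span ℝ (A.transpose '' ↑S')) :
    S ⊆ S' := by
  intro j hj
  by_contra hj'
  have hmem : A.transpose j ∈ Submodule.span ℝ (A.transpose '' ↑S') := by
    rw [← h]
    exact Submodule.subset_span ⟨j, hj, rfl⟩
  replace hmem := (Finsupp.mem_span_image_iff_linearCombination (R := ℝ)).mp hmem
  obtain ⟨l, hl, hlc⟩ := hmem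
  have hsup : ↑l.support ⊆ (↑S' : Set (Fin m)) := hl
  set a : Fin m → ℝ := fun i => l i with ha
  have hmul : A.mulVec a = A.transpose j := by
    rw [← hlc]
    ext i
    rw [show (Finsupp.linearCombination ℝ A.transpose) l = l.sum (fun i c => c • A.transpose i) from
      Finsupp.linearCombination_apply ℝ l, Finsupp.sum]
    simp only [Matrix.mulVec, dotProduct]
    rw [Finset.sum_apply]
    rw [Finset.sum_subset (Finset.subset_univ l.support)]
    · apply Finset.sum_congr rfl
      intro x _
      simp [Matrix.transpose, mul_comm, ha]
    · intro x _ hx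
      simp [Finsupp.notMem_support_iff.mp hx]
  have hej : A.mulVec (Pi.single j 1) = A.transpose j := by
    ext i
    simp [Matrix.mulVec_single, Matrix.transpose]
  have hka : KSparse k a := by
    unfold KSparse
    calc (Finset.univ.filter fun i => a i ≠ 0).card ≤ S'.card := by
          apply Finset.card_le_card
          intro x hx
          simp only [Finset.mem_filter] at hx
          exact hsup (Finsupp.mem_support_iff.mpr hx.2)
      _ = k := hS'
  have hke : KSparse k (Pi.single j 1 : Fin m → ℝ) := by
    unfold KSparse
    calc (Finset.univ.filter fun i => (Pi.single j 1 : Fin m → ℝ) i ≠ 0).card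
        ≤ ({j} : Finset (Fin m)).card := by
          apply Finset.card_le_card
          intro x hx
          simp only [Finset.mem_filter] at hx
          simp only [Finset.mem_singleton]
          by_contra hne
          exact hx.2 (Pi.single_eq_of_ne hne 1)
      _ = 1 := Finset.card_singleton j
      _ ≤ k := hk
  have := hA a (Pi.single j 1) hka hke (hmul.trans hej.symm)
  have haj : a j = 0 := by
    by_contra h0
    exact hj' (hsup (Finsupp.mem_support_iff.mpr h0))
  rw [this] at haj
  simp at haj

theorem stmt6 {n m k : ℕ} (hk : 0 < k) (hkm : k < m)
    (A B : Matrix (Fin n) (Fin m) ℝ)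
    (hA : ∀ a₁ a₂ : Fin m → ℝ, KSparse k a₁ → KSparse k a₂ →
      A.mulVec a₁ = A.mulVec a₂ → a₁ = a₂)
    (π : Finset (Fin m) → Finset (Fin m))
    (hπcard : ∀ S : Finset (Fin m), S.card = k → (π S).card = k)
    (hspan : ∀ S : Finset (Fin m), S.card = k →
      Submodule.span ℝ (A.transpose '' ↑S) = Submodule.span ℝ (B.transpose '' ↑(π S))) :
    ∀ S S' : Finset (Fin m), S.card = k → S'.card = k → π S = π S' → S = S' := by
  intro S S' hS hS' hπ
  have h : Submodule.span ℝ (A.transpose '' ↑S) = Submodule.span ℝ (A.transpose '' ↑S') := by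
    rw [hspan S hS, hspan S' hS', hπ]
  exact Finset.Subset.antisymm (sub_of_span hk A hA S S' hS hS' h)
    (sub_of_span hk A hA S' S hS' hS h.symm)
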